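/- Let G = (V, E) be a graph with a linear order < on E, F a spanning forest of G, e an internally active edge of F, and f an externally active edge of F. Then k(F) = k(F + f) and k(F − e + f) = k(F − e) = k(F) + 1, where k denotes the number of connected components. In particular, adding the externally active edge f cannot reconnect the two components created by deleting the internally active edge e. -/

import Mathlib

open Finset

attribute [local instance] Classical.propDecidable

/-- A multigraph on vertex type `V` with edge index type `E` is given by a map
`ends : E → Sym2 V` (loops and parallel edges are allowed).  For an edge subset
`A ⊆ E`, `edgeGraph ends A` is the simple graph on `V` whose adjacency is
witnessed by some edge of `A`; it determines the connected components of the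
spanning subgraph `(V, A)`. -/
def edgeGraph {V E : Type} (ends : E → Sym2 V) (A : Finset E) : SimpleGraph V where
  Adj a b := a ≠ b ∧ ∃ e ∈ A, ends e = s(a, b)
  symm := ⟨by
    rintro a b ⟨hab, e, he, hs⟩
    exact ⟨Ne.symm hab, e, he, by rw [hs, Sym2.eq_swap]⟩⟩
  loopless := ⟨by rintro a ⟨h, -⟩; exact h rfl⟩

/-- `kc ends A` is the number of connected components of the spanning subgraph `(V, A)`. -/
noncomputable def kc {V E : Type} (ends : E → Sym2 V) (A : Finset E) : ℕ :=
  Nat.card (edgeGraph ends A).ConnectedComponent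

/-- `(V, A)` is a spanning forest of `(V, E)`: it is a forest
(`|A| + k((V,A)) = |V|`, which rules out loops, parallel edges and cycles)
with as many connected components as the whole graph. -/
def IsSpanningForest {V E : Type} [Fintype V] [Fintype E] (ends : E → Sym2 V)
    (A : Finset E) : Prop :=
  A.card + kc ends A = Fintype.card V ∧ kc ends A = kc ends Finset.univ

/-- `F - e + f`. -/
def swapEdge {E : Type} [DecidableEq E] (A : Finset E) (e f : E) : Finset E :=
  insert f (A.erase e)

/-- `e` is internally active in the spanning forest `(V, A)`. -/
def InternallyActive {V E : Type} [Fintype V] [Fintype E] [DecidableEq E] [LinearOrder E]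
    (ends : E → Sym2 V) (A : Finset E) (e : E) : Prop :=
  e ∈ A ∧ ¬ ∃ f, f ∉ A ∧ e < f ∧ IsSpanningForest ends (swapEdge A e f)

/-- `f` is externally active in the spanning forest `(V, A)`. -/
def ExternallyActive {V E : Type} [Fintype V] [Fintype E] [DecidableEq E] [LinearOrder E]
    (ends : E → Sym2 V) (A : Finset E) (f : E) : Prop :=
  f ∉ A ∧ ¬ ∃ e, e ∈ A ∧ f < e ∧ IsSpanningForest ends (swapEdge A e f)

/-- The set `E_i(F)` of internally active edges of the spanning forest `F = (V, A)`. -/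
noncomputable def intAct {V E : Type} [Fintype V] [Fintype E] [DecidableEq E] [LinearOrder E]
    (ends : E → Sym2 V) (A : Finset E) : Finset E :=
  Finset.univ.filter (InternallyActive ends A)

/-- The set `E_e(F)` of externally active edges of the spanning forest `F = (V, A)`. -/
noncomputable def extAct {V E : Type} [Fintype V] [Fintype E] [DecidableEq E] [LinearOrder E]
    (ends : E → Sym2 V) (A : Finset E) : Finset E :=
  Finset.univ.filter (ExternallyActive ends A)

set_option linter.unusedSectionVars false

open SimpleGraph

section Aux
variable {V E : Type} [DecidableEq E] (ends : E → Sym2 V)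

lemma edgeGraph_mono {A B : Finset E} (h : A ⊆ B) : edgeGraph ends A ≤ edgeGraph ends B := by
  rintro a b ⟨hab, e, he, hs⟩
  exact ⟨hab, e, h he, hs⟩

lemma cc_finite [Fintype V] (A : Finset E) : Finite (edgeGraph ends A).ConnectedComponent :=
  Quot.finite _

lemma kc_mono [Fintype V] {A B : Finset E} (h : A ⊆ B) : kc ends B ≤ kc ends A := by
  have := cc_finite ends A
  have := cc_finite ends B
  refine Nat.card_le_card_of_surjective
    (ConnectedComponent.map (Hom.ofLE (edgeGraph_mono ends h))) ?_
  intro c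
  obtain ⟨a, rfl⟩ := Quot.exists_rep c
  exact ⟨(edgeGraph ends A).connectedComponentMk a, rfl⟩

lemma kc_empty [Fintype V] : kc ends (∅ : Finset E) = Fintype.card V := by
  have h : Function.Bijective ((edgeGraph ends (∅ : Finset E)).connectedComponentMk) := by
    constructor
    · intro a b hab
      obtain ⟨w⟩ := (ConnectedComponent.eq.1 hab)
      cases w with
      | nil => rfl
      | cons h _ => simpa using h.2
    · intro c; obtain ⟨a, rfl⟩ := Quot.exists_rep c; exact ⟨a, rfl⟩
  unfold kc
  rw [← Nat.card_eq_of_bijective _ h, Nat.card_eq_fintype_card]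

lemma reach_insert {A : Finset E} {f : E} {u v : V} (hf : ends f = s(u, v)) :
    ∀ {a b : V}, (edgeGraph ends (insert f A)).Reachable a b →
      (edgeGraph ends A).Reachable a b ∨
      ((edgeGraph ends A).Reachable a u ∧ (edgeGraph ends A).Reachable v b) ∨
      ((edgeGraph ends A).Reachable a v ∧ (edgeGraph ends A).Reachable u b) := by
  intro a b ⟨w⟩
  induction w with
  | nil => exact Or.inl (Reachable.refl _)
  | @cons a c b h p ih =>
    obtain ⟨hac, e, he, hs⟩ := h
    rcases Finset.mem_insert.1 he with rfl | heA
    · have hsv : s(a, c) = s(u, v) := hs ▸ hf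
      rcases Sym2.eq_iff.1 hsv with ⟨rfl, rfl⟩ | ⟨rfl, rfl⟩
      · rcases ih with h1 | ⟨h1, h2⟩ | ⟨h1, h2⟩
        · exact Or.inr (Or.inl ⟨Reachable.refl _, h1⟩)
        · exact Or.inr (Or.inl ⟨Reachable.refl _, h2⟩)
        · exact Or.inl h2
      · rcases ih with h1 | ⟨h1, h2⟩ | ⟨h1, h2⟩
        · exact Or.inr (Or.inr ⟨Reachable.refl _, h1⟩)
        · exact Or.inl h2
        · exact Or.inr (Or.inr ⟨Reachable.refl _, h2⟩)
    · have hadj : (edgeGraph ends A).Adj a c := ⟨hac, e, heA, hs⟩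
      rcases ih with h1 | ⟨h1, h2⟩ | ⟨h1, h2⟩
      · exact Or.inl (hadj.reachable.trans h1)
      · exact Or.inr (Or.inl ⟨hadj.reachable.trans h1, h2⟩)
      · exact Or.inr (Or.inr ⟨hadj.reachable.trans h1, h2⟩)

lemma kc_le_insert [Fintype V] (A : Finset E) (f : E) :
    kc ends A ≤ kc ends (insert f A) + 1 := by
  obtain ⟨u, v, hf⟩ : ∃ u v, ends f = s(u, v) := by
    induction ends f using Sym2.ind with
    | _ x y => exact ⟨x, y, rfl⟩
  have := cc_finite ends A
  have := cc_finite ends (insert f A)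
  have hle : edgeGraph ends A ≤ edgeGraph ends (insert f A) :=
    edgeGraph_mono ends (Finset.subset_insert f A)
  set G := edgeGraph ends A with hG
  set G' := edgeGraph ends (insert f A) with hG'
  let φ : G.ConnectedComponent → G'.ConnectedComponent :=
    ConnectedComponent.map (Hom.ofLE hle)
  have key : ∀ c d : G.ConnectedComponent, c ≠ G.connectedComponentMk u →
      d ≠ G.connectedComponentMk u → φ c = φ d → c = d := by
    intro c d hc hd hcd
    obtain ⟨a, rfl⟩ := Quot.exists_rep c
    obtain ⟨b, rfl⟩ := Quot.exists_rep d
    have hr : G'.Reachable a b := ConnectedComponent.eq.1 hcd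
    rcases reach_insert ends hf hr with h1 | ⟨h1, h2⟩ | ⟨h1, h2⟩
    · exact ConnectedComponent.eq.2 h1
    · exact absurd (ConnectedComponent.eq.2 h1) hc
    · exact absurd (ConnectedComponent.eq.2 h2.symm) hd
  have hinj : Function.Injective (fun c : G.ConnectedComponent =>
      if c = G.connectedComponentMk u then (none : Option G'.ConnectedComponent)
      else some (φ c)) := by
    intro c d hcd
    by_cases hc : c = G.connectedComponentMk u <;> by_cases hd : d = G.connectedComponentMk u <;>
      simp [hc, hd] at hcd
    · exact hc.trans hd.symm
    · exact key c d hc hd hcd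
  calc kc ends A = Nat.card G.ConnectedComponent := rfl
    _ ≤ Nat.card (Option G'.ConnectedComponent) := Nat.card_le_card_of_injective _ hinj
    _ = kc ends (insert f A) + 1 := Finite.card_option

lemma kc_card_bound [Fintype V] (B : Finset E) :
    Fintype.card V ≤ B.card + kc ends B := by
  induction B using Finset.induction_on with
  | empty => simp [kc_empty]
  | @insert f B hfB ih =>
    have := kc_le_insert ends B f
    rw [Finset.card_insert_of_notMem hfB]
    omega

end Aux

/-- For a spanning forest `F`, an internally active edge `e` and an
externally active edge `f`: `k(F) = k(F + f)` and
`k(F − e + f) = k(F − e) = k(F) + 1`. -/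
theorem active_edges_independence {V E : Type} [Fintype V] [Fintype E] [DecidableEq E]
    [LinearOrder E] (ends : E → Sym2 V) (A : Finset E)
    (hF : IsSpanningForest ends A) (e f : E)
    (he : InternallyActive ends A e) (hf : ExternallyActive ends A f) :
    kc ends A = kc ends (insert f A) ∧
    kc ends (swapEdge A e f) = kc ends (A.erase e) ∧
    kc ends (A.erase e) = kc ends A + 1 := by
  obtain ⟨heA, heact⟩ := he
  obtain ⟨hfA, hfact⟩ := hf
  obtain ⟨hcard, hspan⟩ := hF
  have hm1 : kc ends (insert f A) ≤ kc ends A := kc_mono ends (Finset.subset_insert f A)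
  have hm2 : kc ends (Finset.univ) ≤ kc ends (insert f A) := kc_mono ends (Finset.subset_univ _)
  have part1 : kc ends A = kc ends (insert f A) := by omega
  have hesub : A.erase e ⊆ A := Finset.erase_subset e A
  have h3a : kc ends A ≤ kc ends (A.erase e) := kc_mono ends hesub
  have h3b : kc ends (A.erase e) ≤ kc ends A + 1 := by
    have := kc_le_insert ends (A.erase e) e
    rwa [Finset.insert_erase heA] at this
  have hcardE : (A.erase e).card + 1 = A.card := Finset.card_erase_add_one heA
  have hbound := kc_card_bound ends (A.erase e)
  have part3 : kc ends (A.erase e) = kc ends A + 1 := by omega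
  refine ⟨part1, ?_, part3⟩
  have hfE : f ∉ A.erase e := fun h => hfA (hesub h)
  have hs1 : kc ends (swapEdge A e f) ≤ kc ends (A.erase e) :=
    kc_mono ends (Finset.subset_insert f _)
  have hs2 : kc ends (A.erase e) ≤ kc ends (swapEdge A e f) + 1 := kc_le_insert ends _ f
  by_contra hne
  have hswap : kc ends (swapEdge A e f) = kc ends A := by omega
  have hcardS : (swapEdge A e f).card = A.card := by
    rw [swapEdge, Finset.card_insert_of_notMem hfE]; omega
  have hSF : IsSpanningForest ends (swapEdge A e f) :=
    ⟨by rw [hcardS, hswap]; exact hcard, by rw [hswap]; exact hspan⟩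
  rcases lt_trichotomy e f with h | h | h
  · exact heact ⟨f, hfA, h, hSF⟩
  · exact hfA (h ▸ heA)
  · exact hfact ⟨e, heA, h, hSF⟩
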